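/- arXiv:2211.13682 — 3 statements merged into one kernel-verified Lean document; each statement's English description precedes it below -/
import Mathlib

section
/- Let m₁ be a positive integer and let ẋ₁ : ℝ → ℝ^{m₁}, F₁ : ℝ → ℝ^{m₁}, x_t : ℝ → ℝ be functions, with ẋ₁ and x_t differentiable and M : ℝ → Matrix (Fin m₁) (Fin m₁) ℝ differentiable, where M(t) is symmetric positive definite for every t. Suppose the admittance dynamics M(t)·ẍ₁(t) + D(t)·ẋ₁(t) = F₁(t) holds for every t, where D(t) is symmetric positive semidefinite and ẍ₁ denotes the derivative of ẋ₁. Define P_D(t) = ẋ₁(t)ᵀ D(t) ẋ₁(t) and P_M(t) = ½ ẋ₁(t)ᵀ Ṁ(t) ẋ₁(t), where Ṁ is the derivative of M. Suppose the tank state satisfies x_t(t)·ẋ_t(t) = φ(t)·P_D(t) − γ(t)·P_M(t) for every t, where φ(t) ∈ {0,1} for all t and γ : ℝ → ℝ satisfies, for every t, either γ(t) = 1 or (γ(t) = 0 and Ṁ(t) is negative semidefinite). Define the storage terms H₁(t) = ½ ẋ₁(t)ᵀ M(t) ẋ₁(t) and T(t) = ½ x_t(t)². Then for every t ≥ 0,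 ∫₀ᵗ ẋ₁(τ)ᵀ F₁(τ) dτ ≥ −H₁(0) − T(0), i.e. the tank-augmented variable admittance system is passive with respect to the pair (F₁, ẋ₁). (All integrands are assumed continuous.) -/
open Matrix

/-- Proposition 1: passivity of the tank-based variable admittance controller
with respect to the pair `(F₁, ẋ₁)`. -/
theorem tank_admittance_passive
    (m₁ : ℕ) (hm₁ : 0 < m₁)
    (x1' x1'' F₁ : ℝ → Fin m₁ → ℝ)
    (xt xt' : ℝ → ℝ)
    (M M' D : ℝ → Matrix (Fin m₁) (Fin m₁) ℝ)
    (φ γ : ℝ → ℝ)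
    (hx1 : ∀ t, HasDerivAt x1' (x1'' t) t)
    (hxt : ∀ t, HasDerivAt xt (xt' t) t)
    (hM : ∀ t i j, HasDerivAt (fun s => M s i j) (M' t i j) t)
    (hMpd : ∀ t, (M t).PosDef)
    (hDpsd : ∀ t, (D t).PosSemidef)
    (hdyn : ∀ t, (M t).mulVec (x1'' t) + (D t).mulVec (x1' t) = F₁ t)
    (htank : ∀ t, xt t * xt' t =
      φ t * (x1' t ⬝ᵥ (D t).mulVec (x1' t)) -
        γ t * ((1 : ℝ) / 2 * (x1' t ⬝ᵥ (M' t).mulVec (x1' t))))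
    (hφ : ∀ t, φ t = 0 ∨ φ t = 1)
    (hγ : ∀ t, γ t = 1 ∨ (γ t = 0 ∧ (-(M' t)).PosSemidef))
    (hcont : Continuous fun t => x1' t ⬝ᵥ F₁ t) :
    ∀ t ≥ (0 : ℝ),
      (∫ τ in (0 : ℝ)..t, x1' τ ⬝ᵥ F₁ τ) ≥
        -((1 : ℝ) / 2 * (x1' 0 ⬝ᵥ (M 0).mulVec (x1' 0))) -
          (1 : ℝ) / 2 * (xt 0) ^ 2 := by
  -- the storage function
  set g : ℝ → ℝ := fun t =>
    (1 : ℝ) / 2 * (x1' t ⬝ᵥ (M t).mulVec (x1' t)) + (1 : ℝ) / 2 * (xt t) ^ 2 with hgdef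
  -- componentwise derivatives of the velocity
  have hxc : ∀ t i, HasDerivAt (fun s => x1' s i) (x1'' t i) t :=
    fun t i => (hasDerivAt_pi.mp (hx1 t)) i
  -- derivative of the kinetic quadratic form
  have hquad : ∀ t, HasDerivAt (fun s => x1' s ⬝ᵥ (M s).mulVec (x1' s))
      (x1'' t ⬝ᵥ (M t).mulVec (x1' t) +
        (x1' t ⬝ᵥ (M' t).mulVec (x1' t) + x1' t ⬝ᵥ (M t).mulVec (x1'' t))) t := by
    intro t
    have h1 : HasDerivAt (fun s => ∑ i, x1' s i * ∑ j, M s i j * x1' s j)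
        (∑ i, (x1'' t i * ∑ j, M t i j * x1' t j +
          x1' t i * ∑ j, (M' t i j * x1' t j + M t i j * x1'' t j))) t := by
      apply HasDerivAt.fun_sum
      intro i _
      exact (hxc t i).mul (HasDerivAt.fun_sum fun j _ => ((hM t i j).mul (hxc t j)))
    have heq : (fun s => x1' s ⬝ᵥ (M s).mulVec (x1' s)) =
        fun s => ∑ i, x1' s i * ∑ j, M s i j * x1' s j := by
      funext s; simp [dotProduct, mulVec]
    rw [heq]
    convert h1 using 1
    simp only [dotProduct, mulVec, Finset.sum_add_distrib, mul_add, Finset.mul_sum]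
  -- symmetry of M
  have hsymm : ∀ t, x1'' t ⬝ᵥ (M t).mulVec (x1' t) = x1' t ⬝ᵥ (M t).mulVec (x1'' t) := by
    intro t
    have hs : ∀ i j, M t i j = M t j i := by
      intro i j
      simpa using ((hMpd t).isHermitian.apply i j).symm
    simp only [dotProduct, mulVec, Finset.mul_sum]
    rw [Finset.sum_comm]
    apply Finset.sum_congr rfl
    intro i _
    apply Finset.sum_congr rfl
    intro j _
    rw [hs j i]; ring
  -- derivative of the storage function
  have hg : ∀ t, HasDerivAt g
      (x1' t ⬝ᵥ F₁ t - (1 - φ t) * (x1' t ⬝ᵥ (D t).mulVec (x1' t)) +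
        (1 - γ t) * ((1 : ℝ) / 2 * (x1' t ⬝ᵥ (M' t).mulVec (x1' t)))) t := by
    intro t
    have hxt2 : HasDerivAt (fun s => (1 : ℝ) / 2 * (xt s) ^ 2) (xt t * xt' t) t := by
      have := ((hxt t).pow 2).const_mul ((1 : ℝ) / 2)
      refine this.congr_deriv ?_
      ring
    have h := ((hquad t).const_mul ((1 : ℝ) / 2)).add hxt2
    refine h.congr_deriv ?_
    rw [htank t, hsymm t]
    have hd : x1' t ⬝ᵥ (M t).mulVec (x1'' t) =
        x1' t ⬝ᵥ F₁ t - x1' t ⬝ᵥ (D t).mulVec (x1' t) := by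
      have := congrArg (fun v => x1' t ⬝ᵥ v) (hdyn t)
      simp only [dotProduct_add] at this
      linarith
    rw [hd]
    ring
  -- the derivative is bounded by the supplied power
  have hbound : ∀ t,
      x1' t ⬝ᵥ F₁ t - (1 - φ t) * (x1' t ⬝ᵥ (D t).mulVec (x1' t)) +
        (1 - γ t) * ((1 : ℝ) / 2 * (x1' t ⬝ᵥ (M' t).mulVec (x1' t))) ≤
      x1' t ⬝ᵥ F₁ t := by
    intro t
    have hPD : 0 ≤ x1' t ⬝ᵥ (D t).mulVec (x1' t) := by
      have := (hDpsd t).dotProduct_mulVec_nonneg (x1' t)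
      simpa using this
    have h1 : 0 ≤ (1 - φ t) * (x1' t ⬝ᵥ (D t).mulVec (x1' t)) := by
      rcases hφ t with h | h <;> rw [h] <;> simp [hPD]
    have h2 : (1 - γ t) * ((1 : ℝ) / 2 * (x1' t ⬝ᵥ (M' t).mulVec (x1' t))) ≤ 0 := by
      rcases hγ t with h | ⟨h, hpsd⟩
      · rw [h]; simp
      · rw [h]
        have := hpsd.dotProduct_mulVec_nonneg (x1' t)
        simp only [neg_mulVec, dotProduct_neg] at this
        have : x1' t ⬝ᵥ (M' t).mulVec (x1' t) ≤ 0 := by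
          simpa using this
        nlinarith
    linarith
  -- the integral as a function, with its derivative
  set u : ℝ → ℝ := fun t => ∫ τ in (0 : ℝ)..t, x1' τ ⬝ᵥ F₁ τ with hudef
  have hu : ∀ t, HasDerivAt u (x1' t ⬝ᵥ F₁ t) t :=
    fun t => (hcont.integral_hasStrictDerivAt 0 t).hasDerivAt
  -- u - g is monotone
  have hmono : Monotone (fun t => u t - g t) := by
    apply monotone_of_deriv_nonneg
    · exact fun t => ((hu t).sub (hg t)).differentiableAt
    · intro t
      rw [((hu t).fun_sub (hg t)).deriv]
      have := hbound t
      linarith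
  -- nonnegativity of the storage
  have hgnn : ∀ t, 0 ≤ g t := by
    intro t
    have h1 : 0 ≤ x1' t ⬝ᵥ (M t).mulVec (x1' t) := by
      have := (hMpd t).posSemidef.dotProduct_mulVec_nonneg (x1' t)
      simpa using this
    have h2 : 0 ≤ (xt t) ^ 2 := sq_nonneg _
    simp only [hgdef]
    nlinarith
  -- conclude
  intro t ht
  have h0 : u 0 - g 0 ≤ u t - g t := hmono ht
  have hu0 : u 0 = 0 := by simp [hudef]
  have := hgnn t
  have hg0 : g 0 = (1 : ℝ) / 2 * (x1' 0 ⬝ᵥ (M 0).mulVec (x1' 0)) + (1 : ℝ) / 2 * (xt 0) ^ 2 :=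
    rfl
  have : u t ≥ -g 0 := by linarith
  rw [hg0] at this
  linarith [this]
end

section
/- Let m₁, m₂ be positive integers. Let ẋ₁ : ℝ → ℝ^{m₁}, v₂ : ℝ → ℝ^{m₂}, F₁ : ℝ → ℝ^{m₁}, F_null : ℝ → ℝ^{m₂}, x_t : ℝ → ℝ, with ẋ₁, v₂, x_t differentiable and M : ℝ → Matrix (Fin m₁) (Fin m₁) ℝ differentiable with M(t) symmetric positive definite for every t. Suppose: (i) M(t)ẍ₁(t) + (D(t) + ψ(t)·I)ẋ₁(t) = F₁(t) for all t, where D(t) is symmetric positive semidefinite and ψ(t) ≥ 0; (ii) v̇₂(t) = −D_N(t)·v₂(t) + F_null(t) for all t, where D_N(t) is symmetric positive semidefinite; (iii) x_t(t)·ẋ_t(t) = φ(t)·(P_D(t) + P_N(t)) − γ(t)·P_M(t) for all t, where P_D(t) = ẋ₁(t)ᵀD(t)ẋ₁(t), P_N(t) = v₂(t)ᵀD_N(t)v₂(t), P_M(t) = ½ẋ₁(t)ᵀṀ(t)ẋ₁(t), φ(t) ∈ {0,1}, and for every t either γ(t) = 1 or (γ(t) = 0 and Ṁ(t) is negative semidefinite).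 Define H₁(t) = ½ẋ₁(t)ᵀM(t)ẋ₁(t), T(t) = ½x_t(t)², H₂(t) = ½v₂(t)ᵀv₂(t). Then for every t ≥ 0, ∫₀ᵗ (ẋ₁(τ)ᵀF₁(τ) + v₂(τ)ᵀF_null(τ)) dτ ≥ −H₁(0) − T(0) − H₂(0). (All integrands are assumed continuous.) -/
open Matrix

lemma quad_hasDerivAt {n : ℕ} (x x' : ℝ → Fin n → ℝ)
    (A A' : ℝ → Matrix (Fin n) (Fin n) ℝ) (t : ℝ)
    (hx : ∀ i, HasDerivAt (fun s => x s i) (x' t i) t)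
    (hA : ∀ i j, HasDerivAt (fun s => A s i j) (A' t i j) t) :
    HasDerivAt (fun s => x s ⬝ᵥ (A s).mulVec (x s))
      (x' t ⬝ᵥ (A t).mulVec (x t) + x t ⬝ᵥ (A' t).mulVec (x t)
        + x t ⬝ᵥ (A t).mulVec (x' t)) t := by
  have h : HasDerivAt (fun s => ∑ i, ∑ j, x s i * (A s i j * x s j))
      (∑ i, ∑ j, (x' t i * (A t i j * x t j) +
        x t i * (A' t i j * x t j + A t i j * x' t j))) t := by
    refine HasDerivAt.fun_sum fun i _ => HasDerivAt.fun_sum fun j _ => ?_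
    exact (hx i).mul ((hA i j).mul (hx j))
  have e1 : (fun s => ∑ i, ∑ j, x s i * (A s i j * x s j)) =
      fun s => x s ⬝ᵥ (A s).mulVec (x s) := by
    funext s; simp [dotProduct, mulVec, Finset.mul_sum]
  rw [e1] at h
  convert h using 1
  simp only [dotProduct, mulVec, Finset.mul_sum, ← Finset.sum_add_distrib]
  exact Finset.sum_congr rfl fun i _ => Finset.sum_congr rfl fun j _ => by ring

lemma dotSelf_hasDerivAt {n : ℕ} (x x' : ℝ → Fin n → ℝ) (t : ℝ)
    (hx : ∀ i, HasDerivAt (fun s => x s i) (x' t i) t) :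
    HasDerivAt (fun s => x s ⬝ᵥ x s) (2 * (x t ⬝ᵥ x' t)) t := by
  have h : HasDerivAt (fun s => ∑ i, x s i * x s i)
      (∑ i, (x' t i * x t i + x t i * x' t i)) t :=
    HasDerivAt.fun_sum fun i _ => (hx i).mul (hx i)
  have e1 : (fun s => ∑ i, x s i * x s i) = fun s => x s ⬝ᵥ x s := by
    funext s; simp [dotProduct]
  rw [e1] at h
  convert h using 1
  simp only [dotProduct, Finset.mul_sum]
  exact Finset.sum_congr rfl fun i _ => by ring

lemma symm_quad {n : ℕ} {A : Matrix (Fin n) (Fin n) ℝ} (hA : A.IsHermitian)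
    (x y : Fin n → ℝ) : x ⬝ᵥ A.mulVec y = y ⬝ᵥ A.mulVec x := by
  have hs : ∀ i j, A i j = A j i := fun i j => by
    simpa using congrFun (congrFun hA j) i
  simp only [dotProduct, mulVec, Finset.mul_sum]
  rw [Finset.sum_comm]
  exact Finset.sum_congr rfl fun i _ => Finset.sum_congr rfl fun j _ => by
    rw [hs i j]; ring

lemma psd_quad_nonneg {n : ℕ} {A : Matrix (Fin n) (Fin n) ℝ} (hA : A.PosSemidef)
    (x : Fin n → ℝ) : 0 ≤ x ⬝ᵥ A.mulVec x := by
  simpa using hA.dotProduct_mulVec_nonneg x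

lemma dot_self_nonneg' {n : ℕ} (x : Fin n → ℝ) : 0 ≤ x ⬝ᵥ x :=
  Finset.sum_nonneg fun i _ => mul_self_nonneg _

/-- Proposition 2: passivity of the tank-based variable admittance controller
augmented with the null-space energy-harvesting dynamics, with respect to the
pairs `(F₁, ẋ₁)` and `(F_null, v₂)`. -/
theorem tank_admittance_nullspace_passive
    (m₁ m₂ : ℕ) (hm₁ : 0 < m₁) (hm₂ : 0 < m₂)
    (x1' x1'' F₁ : ℝ → Fin m₁ → ℝ)
    (v₂ v₂' Fnull : ℝ → Fin m₂ → ℝ)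
    (xt xt' : ℝ → ℝ)
    (M M' D : ℝ → Matrix (Fin m₁) (Fin m₁) ℝ)
    (DN : ℝ → Matrix (Fin m₂) (Fin m₂) ℝ)
    (ψ φ γ : ℝ → ℝ)
    (hx1 : ∀ t, HasDerivAt x1' (x1'' t) t)
    (hv2 : ∀ t, HasDerivAt v₂ (v₂' t) t)
    (hxt : ∀ t, HasDerivAt xt (xt' t) t)
    (hM : ∀ t i j, HasDerivAt (fun s => M s i j) (M' t i j) t)
    (hMpd : ∀ t, (M t).PosDef)
    (hDpsd : ∀ t, (D t).PosSemidef)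
    (hDNpsd : ∀ t, (DN t).PosSemidef)
    (hψ : ∀ t, 0 ≤ ψ t)
    (hdyn1 : ∀ t, (M t).mulVec (x1'' t) +
      (D t + ψ t • (1 : Matrix (Fin m₁) (Fin m₁) ℝ)).mulVec (x1' t) = F₁ t)
    (hdyn2 : ∀ t, v₂' t = -(DN t).mulVec (v₂ t) + Fnull t)
    (htank : ∀ t, xt t * xt' t =
      φ t * ((x1' t ⬝ᵥ (D t).mulVec (x1' t)) + (v₂ t ⬝ᵥ (DN t).mulVec (v₂ t))) -
        γ t * ((1 : ℝ) / 2 * (x1' t ⬝ᵥ (M' t).mulVec (x1' t))))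
    (hφ : ∀ t, φ t = 0 ∨ φ t = 1)
    (hγ : ∀ t, γ t = 1 ∨ (γ t = 0 ∧ (-(M' t)).PosSemidef))
    (hcont : Continuous fun t => x1' t ⬝ᵥ F₁ t + v₂ t ⬝ᵥ Fnull t) :
    ∀ t ≥ (0 : ℝ),
      (∫ τ in (0 : ℝ)..t, (x1' τ ⬝ᵥ F₁ τ + v₂ τ ⬝ᵥ Fnull τ)) ≥
        -((1 : ℝ) / 2 * (x1' 0 ⬝ᵥ (M 0).mulVec (x1' 0))) -
          (1 : ℝ) / 2 * (xt 0) ^ 2 - (1 : ℝ) / 2 * (v₂ 0 ⬝ᵥ v₂ 0) := by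
  -- total stored energy
  set H : ℝ → ℝ := fun s => 1/2 * (x1' s ⬝ᵥ (M s).mulVec (x1' s)) +
      1/2 * xt s ^ 2 + 1/2 * (v₂ s ⬝ᵥ v₂ s) with hHdef
  -- supplied power
  set P : ℝ → ℝ := fun s => x1' s ⬝ᵥ F₁ s + v₂ s ⬝ᵥ Fnull s with hPdef
  -- derivative of the energy
  set E : ℝ → ℝ := fun s =>
      1/2 * (x1'' s ⬝ᵥ (M s).mulVec (x1' s) + x1' s ⬝ᵥ (M' s).mulVec (x1' s)
        + x1' s ⬝ᵥ (M s).mulVec (x1'' s)) + xt s * xt' s + (v₂ s ⬝ᵥ v₂' s)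
    with hEdef
  have hHd : ∀ s, HasDerivAt H (E s) s := by
    intro s
    have h1 := quad_hasDerivAt x1' x1'' M M' s
      (fun i => hasDerivAt_pi.mp (hx1 s) i) (fun i j => hM s i j)
    have h2 := dotSelf_hasDerivAt v₂ v₂' s (fun i => hasDerivAt_pi.mp (hv2 s) i)
    have h3 := (hxt s).pow 2
    have h := ((h1.const_mul (1/2 : ℝ)).add (h3.const_mul (1/2 : ℝ))).add
      (h2.const_mul (1/2 : ℝ))
    refine h.congr_deriv ?_
    simp [hEdef]; ring
  -- the key power-balance inequality
  have key : ∀ s, E s ≤ P s := by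
    intro s
    have hsym : x1'' s ⬝ᵥ (M s).mulVec (x1' s) = x1' s ⬝ᵥ (M s).mulVec (x1'' s) :=
      symm_quad (hMpd s).1 _ _
    have h1 : (M s).mulVec (x1'' s) = F₁ s - (D s).mulVec (x1' s) - ψ s • x1' s := by
      have h := hdyn1 s
      rw [add_mulVec, smul_mulVec, one_mulVec] at h
      rw [← h]; abel
    have hMx : x1' s ⬝ᵥ (M s).mulVec (x1'' s)
        = x1' s ⬝ᵥ F₁ s - x1' s ⬝ᵥ (D s).mulVec (x1' s)
          - ψ s * (x1' s ⬝ᵥ x1' s) := by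
      rw [h1]; simp [dotProduct_sub, dotProduct_smul, smul_eq_mul]
    have hv2e : v₂ s ⬝ᵥ v₂' s
        = -(v₂ s ⬝ᵥ (DN s).mulVec (v₂ s)) + v₂ s ⬝ᵥ Fnull s := by
      rw [hdyn2 s]; simp [dotProduct_add, dotProduct_neg]
    have htk := htank s
    have hPD := psd_quad_nonneg (hDpsd s) (x1' s)
    have hPN := psd_quad_nonneg (hDNpsd s) (v₂ s)
    have hxx : 0 ≤ ψ s * (x1' s ⬝ᵥ x1' s) :=
      mul_nonneg (hψ s) (dot_self_nonneg' _)
    simp only [hEdef, hPdef]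
    rw [hsym, hMx, hv2e, htk]
    rcases hφ s with hφ0 | hφ1 <;>
      rcases hγ s with hγ1 | ⟨hγ0, hMn⟩
    · rw [hφ0, hγ1]; linarith
    · have hPM : x1' s ⬝ᵥ (M' s).mulVec (x1' s) ≤ 0 := by
        have := psd_quad_nonneg hMn (x1' s)
        rw [neg_mulVec, dotProduct_neg] at this; linarith
      rw [hφ0, hγ0]; linarith
    · rw [hφ1, hγ1]; linarith
    · have hPM : x1' s ⬝ᵥ (M' s).mulVec (x1' s) ≤ 0 := by
        have := psd_quad_nonneg hMn (x1' s)
        rw [neg_mulVec, dotProduct_neg] at this; linarith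
      rw [hφ1, hγ0]; linarith
  -- fundamental theorem of calculus for the power integral
  have hInt : ∀ s : ℝ, HasDerivAt (fun u => ∫ τ in (0:ℝ)..u, P τ) (P s) s := by
    intro s
    exact intervalIntegral.integral_hasDerivAt_right
      (hcont.intervalIntegrable 0 s)
      hcont.aestronglyMeasurable.stronglyMeasurableAtFilter
      hcont.continuousAt
  -- the gap function is monotone
  have hmono : Monotone fun u => (∫ τ in (0:ℝ)..u, P τ) - H u := by
    apply monotone_of_hasDerivAt_nonneg (f' := fun s => P s - E s)
    · intro s; exact (hInt s).sub (hHd s)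
    · intro s; simp only [Pi.zero_apply]; linarith [key s]
  intro t ht
  have h0t := hmono ht
  simp only [intervalIntegral.integral_same] at h0t
  have hHt : 0 ≤ H t := by
    have h1 := psd_quad_nonneg (hMpd t).posSemidef (x1' t)
    have h2 := dot_self_nonneg' (v₂ t)
    have h3 := sq_nonneg (xt t)
    simp only [hHdef]; linarith
  have hHval : H 0 = 1/2 * (x1' 0 ⬝ᵥ (M 0).mulVec (x1' 0)) +
      1/2 * xt 0 ^ 2 + 1/2 * (v₂ 0 ⬝ᵥ v₂ 0) := rfl
  have hPval : (∫ τ in (0:ℝ)..t, (x1' τ ⬝ᵥ F₁ τ + v₂ τ ⬝ᵥ Fnull τ))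
      = ∫ τ in (0:ℝ)..t, P τ := rfl
  rw [hHval] at h0t
  clear_value H P E
  have hfin : -(1/2 * (x1' 0 ⬝ᵥ (M 0).mulVec (x1' 0)) +
      1/2 * xt 0 ^ 2 + 1/2 * (v₂ 0 ⬝ᵥ v₂ 0)) ≤ ∫ τ in (0:ℝ)..t, P τ := by
    linarith [h0t, hHt]
  rw [ge_iff_le]
  linarith [hfin]
end

section
/- Under the hypotheses of the preceding statement (the system of Proposition 2, with ψ ≡ 0), define the total storage function S(t) = H₁(t) + T(t) + H₂(t), where H₁(t) = ½ẋ₁(t)ᵀM(t)ẋ₁(t), T(t) = ½x_t(t)², H₂(t) = ½v₂(t)ᵀv₂(t). Then for every t, S is differentiable at t and Ṡ(t) = ẋ₁(t)ᵀF₁(t) − (1 − φ(t))·P_D(t) − (1 − φ(t))·P_N(t) + (1 − γ(t))·P_M(t) + v₂(t)ᵀF_null(t), where P_D(t) = ẋ₁(t)ᵀD(t)ẋ₁(t), P_N(t) = v₂(t)ᵀD_N(t)v₂(t), and P_M(t) = ½ẋ₁(t)ᵀṀ(t)ẋ₁(t). -/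
open Matrix

private lemma quad_deriv {n : ℕ} (a a' : ℝ → Fin n → ℝ)
    (A A' : ℝ → Matrix (Fin n) (Fin n) ℝ) (t : ℝ)
    (ha : ∀ i, HasDerivAt (fun s => a s i) (a' t i) t)
    (hA : ∀ i j, HasDerivAt (fun s => A s i j) (A' t i j) t) :
    HasDerivAt (fun s => a s ⬝ᵥ (A s).mulVec (a s))
      (a' t ⬝ᵥ (A t).mulVec (a t) + a t ⬝ᵥ (A' t).mulVec (a t)
        + a t ⬝ᵥ (A t).mulVec (a' t)) t := by
  have h : HasDerivAt (fun s => ∑ i, a s i * ∑ j, A s i j * a s j)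
      (∑ i, (a' t i * ∑ j, A t i j * a t j +
        a t i * ∑ j, (A' t i j * a t j + A t i j * a' t j))) t :=
    HasDerivAt.fun_sum fun i _ =>
      (ha i).mul (HasDerivAt.fun_sum fun j _ => (hA i j).mul (ha j))
  refine HasDerivAt.congr_deriv h ?_
  simp only [dotProduct, mulVec, Finset.sum_add_distrib, Finset.mul_sum, mul_add]
  ring

private lemma dot_deriv {n : ℕ} (a a' : ℝ → Fin n → ℝ) (t : ℝ)
    (ha : ∀ i, HasDerivAt (fun s => a s i) (a' t i) t) :
    HasDerivAt (fun s => a s ⬝ᵥ a s) (a' t ⬝ᵥ a t + a t ⬝ᵥ a' t) t := by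
  have h : HasDerivAt (fun s => ∑ i, a s i * a s i)
      (∑ i, (a' t i * a t i + a t i * a' t i)) t :=
    HasDerivAt.fun_sum fun i _ => (ha i).mul (ha i)
  refine HasDerivAt.congr_deriv h ?_
  simp [dotProduct, Finset.sum_add_distrib]

/-- Equation (25) in the proof of Proposition 2: the derivative of the total
storage function `S = H₁ + T + H₂` equals
`ẋ₁ᵀF₁ − (1−φ)P_D − (1−φ)P_N + (1−γ)P_M + v₂ᵀF_null`. -/
theorem storage_function_derivative
    (m₁ m₂ : ℕ) (hm₁ : 0 < m₁) (hm₂ : 0 < m₂)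
    (x1' x1'' F₁ : ℝ → Fin m₁ → ℝ)
    (v₂ v₂' Fnull : ℝ → Fin m₂ → ℝ)
    (xt xt' : ℝ → ℝ)
    (M M' D : ℝ → Matrix (Fin m₁) (Fin m₁) ℝ)
    (DN : ℝ → Matrix (Fin m₂) (Fin m₂) ℝ)
    (φ γ : ℝ → ℝ)
    (hx1 : ∀ t, HasDerivAt x1' (x1'' t) t)
    (hv2 : ∀ t, HasDerivAt v₂ (v₂' t) t)
    (hxt : ∀ t, HasDerivAt xt (xt' t) t)
    (hM : ∀ t i j, HasDerivAt (fun s => M s i j) (M' t i j) t)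
    (hMpd : ∀ t, (M t).PosDef)
    (hDpsd : ∀ t, (D t).PosSemidef)
    (hDNpsd : ∀ t, (DN t).PosSemidef)
    (hdyn1 : ∀ t, (M t).mulVec (x1'' t) + (D t).mulVec (x1' t) = F₁ t)
    (hdyn2 : ∀ t, v₂' t = -(DN t).mulVec (v₂ t) + Fnull t)
    (htank : ∀ t, xt t * xt' t =
      φ t * ((x1' t ⬝ᵥ (D t).mulVec (x1' t)) + (v₂ t ⬝ᵥ (DN t).mulVec (v₂ t))) -
        γ t * ((1 : ℝ) / 2 * (x1' t ⬝ᵥ (M' t).mulVec (x1' t)))) :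
    ∀ t, HasDerivAt
      (fun s => (1 : ℝ) / 2 * (x1' s ⬝ᵥ (M s).mulVec (x1' s)) +
        (1 : ℝ) / 2 * (xt s) ^ 2 + (1 : ℝ) / 2 * (v₂ s ⬝ᵥ v₂ s))
      (x1' t ⬝ᵥ F₁ t -
        (1 - φ t) * (x1' t ⬝ᵥ (D t).mulVec (x1' t)) -
        (1 - φ t) * (v₂ t ⬝ᵥ (DN t).mulVec (v₂ t)) +
        (1 - γ t) * ((1 : ℝ) / 2 * (x1' t ⬝ᵥ (M' t).mulVec (x1' t))) +
        v₂ t ⬝ᵥ Fnull t) t := by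
  intro t
  have hx1c : ∀ i, HasDerivAt (fun s => x1' s i) (x1'' t i) t :=
    hasDerivAt_pi.1 (hx1 t)
  have hv2c : ∀ i, HasDerivAt (fun s => v₂ s i) (v₂' t i) t :=
    hasDerivAt_pi.1 (hv2 t)
  have h1 := quad_deriv x1' x1'' M M' t hx1c (hM t)
  have h2 : HasDerivAt (fun s => (xt s) ^ 2) (xt' t * xt t + xt t * xt' t) t := by
    have := (hxt t).mul (hxt t)
    refine this.congr_of_eventuallyEq (Filter.Eventually.of_forall fun s => ?_)
    · simp [sq]
  have h3 := dot_deriv v₂ v₂' t hv2c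
  have H := ((h1.const_mul ((1:ℝ)/2)).add (h2.const_mul ((1:ℝ)/2))).add
    (h3.const_mul ((1:ℝ)/2))
  refine HasDerivAt.congr_deriv H ?_
  -- symmetry of M
  have hMs : (M t)ᵀ = M t := by
    rw [← conjTranspose_eq_transpose_of_trivial]; exact (hMpd t).isHermitian
  have hsym : x1'' t ⬝ᵥ (M t).mulVec (x1' t) = x1' t ⬝ᵥ (M t).mulVec (x1'' t) := by
    rw [dotProduct_mulVec, ← hMs, vecMul_transpose, dotProduct_comm, hMs]
  have hsym2 : v₂' t ⬝ᵥ v₂ t = v₂ t ⬝ᵥ v₂' t := dotProduct_comm _ _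
  have hma : (M t).mulVec (x1'' t) = F₁ t - (D t).mulVec (x1' t) := by
    rw [← hdyn1 t]; abel
  have key1 : x1' t ⬝ᵥ (M t).mulVec (x1'' t) =
      x1' t ⬝ᵥ F₁ t - x1' t ⬝ᵥ (D t).mulVec (x1' t) := by
    rw [hma, dotProduct_sub]
  have key2 : v₂ t ⬝ᵥ v₂' t = -(v₂ t ⬝ᵥ (DN t).mulVec (v₂ t)) + v₂ t ⬝ᵥ Fnull t := by
    rw [hdyn2 t, dotProduct_add, dotProduct_neg]
  have ht := htank t
  rw [hsym, hsym2, key1, key2]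
  nlinarith [ht]
end
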